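/- Let G be a finite bridgeless multigraph with a total order on E(G), A a finite abelian group, and b : V(G) → A locally zero-sum. Then for every i with 0 ≤ i ≤ m(G), the coefficient a_i(G,b) (the number of i-edge subsets S with G−S b-compatible and S containing no b-compatible broken bond) is a positive integer, since a_i(G,0) ≤ a_i(G,b) and a_i(G,0) ≥ 1. -/

import Mathlib

open Finset

attribute [local instance] Classical.propDecidable

universe u v w

/-- Adjacency through a present edge in the spanning subgraph with edge predicate `ok`. -/
def edgeRel {V E : Type*} (head tail : E → V) (ok : E → Prop) (u v : V) : Prop :=
  ∃ e, ok e ∧ ((head e = u ∧ tail e = v) ∨ (head e = v ∧ tail e = u))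

/-- Reachability (same connected component) in the spanning subgraph. -/
def Reach {V E : Type*} (head tail : E → V) (ok : E → Prop) : V → V → Prop :=
  Relation.EqvGen (edgeRel head tail ok)

/-- Number of connected components of the spanning subgraph. -/
noncomputable def ncomp {V E : Type*} (head tail : E → V) (ok : E → Prop) : ℕ :=
  Nat.card (Quotient (Relation.EqvGen.setoid (edgeRel head tail ok)))

/-- Boundary of an edge-valued function, via the orientation `head`/`tail`. -/
noncomputable def bdry {V E A : Type*} [Fintype E] [AddCommGroup A]
    (head tail : E → V) (f : E → A) (v : V) : A :=
  ∑ e : E, ((if head e = v then f e else 0) - (if tail e = v then f e else 0))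

/-- Boundary of an edge-valued function on the spanning subgraph with edges `ok`. -/
noncomputable def bdrySub {V E A : Type*} [Fintype E] [AddCommGroup A]
    (head tail : E → V) (ok : E → Prop) (f : {e : E // ok e} → A) (v : V) : A :=
  ∑ e : {e : E // ok e}, ((if head e.1 = v then f e else 0) - (if tail e.1 = v then f e else 0))

/-- `b` sums to zero over every connected component of the spanning subgraph
(`b`-compatibility / locally zero-sum). -/
def Compatible {V E A : Type*} [Fintype V] [AddCommGroup A]
    (head tail : E → V) (ok : E → Prop) (b : V → A) : Prop :=
  ∀ v : V, (∑ u : V, if Reach head tail ok u v then b u else 0) = 0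

/-- A bond: a minimal nonempty edge set whose deletion changes the number of components,
equivalently a minimal nonempty edge cut. -/
def IsBond {V E : Type*} (head tail : E → V) (F : Finset E) : Prop :=
  F.Nonempty ∧ ncomp head tail (fun e => e ∉ F) ≠ ncomp head tail (fun _ => True) ∧
    ∀ F' : Finset E, F' ⊂ F → ncomp head tail (fun e => e ∉ F') = ncomp head tail (fun _ => True)

/-- Cycle rank `m(G-S) = |E(G-S)| - |V| + c(G-S)` of the spanning subgraph `G-S`. -/
noncomputable def cycRank {V E : Type*} [Fintype V] [Fintype E]
    (head tail : E → V) (S : Finset E) : ℕ :=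
  (Fintype.card E - S.card) + ncomp head tail (fun e => e ∉ S) - Fintype.card V

/-- A `b`-compatible bond. -/
def IsCBond {V E A : Type*} [Fintype V] [AddCommGroup A]
    (head tail : E → V) (b : V → A) (F : Finset E) : Prop :=
  IsBond head tail F ∧ Compatible head tail (fun e => e ∉ F) b

/-- A `b`-compatible broken bond w.r.t. the total order `lo` on edges. -/
def IsCBrokenBond {V E A : Type*} [Fintype V] [AddCommGroup A]
    (head tail : E → V) (lo : LinearOrder E) (b : V → A) (B : Finset E) : Prop :=
  ∃ F : Finset E, IsCBond head tail b F ∧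
    ∃ hne : F.Nonempty, B = F.erase (@Finset.max' E lo F hne)

/-- The signless coefficient `a_i(G,b)`: the number of `i`-edge subsets `S` with `G-S`
`b`-compatible and `S` containing no `b`-compatible broken bond. -/
noncomputable def aCoeff {V E A : Type*} [Fintype V] [Fintype E] [AddCommGroup A]
    (head tail : E → V) (lo : LinearOrder E) (b : V → A) (i : ℕ) : ℕ :=
  Nat.card {S : Finset E // S.card = i ∧ Compatible head tail (fun e => e ∉ S) b ∧
    ∀ B : Finset E, IsCBrokenBond head tail lo b B → ¬ B ⊆ S}

/-- Adjacency inside the induced subgraph on the vertex set `X`. -/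
def edgeRelIn {V E : Type*} (head tail : E → V) (X : Set V) (u v : V) : Prop :=
  ∃ e, head e ∈ X ∧ tail e ∈ X ∧ ((head e = u ∧ tail e = v) ∨ (head e = v ∧ tail e = u))

/-- Reachability within the induced subgraph on `X`. -/
def ReachIn {V E : Type*} (head tail : E → V) (X : Set V) : V → V → Prop :=
  Relation.EqvGen (edgeRelIn head tail X)

def setoidOn {V E : Type*} (head tail : E → V) (X : Set V) : Setoid {v : V // v ∈ X} :=
  ⟨fun a b => ReachIn head tail X a.1 b.1,
   ⟨fun a => Relation.EqvGen.refl a.1, fun h => Relation.EqvGen.symm _ _ h, fun h h' => Relation.EqvGen.trans _ _ _ h h'⟩⟩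

/-- Number of connected components of the induced subgraph on `X`. -/
noncomputable def ncompOn {V E : Type*} (head tail : E → V) (X : Set V) : ℕ :=
  Nat.card (Quotient (setoidOn head tail X))

/-- `X ∈ Λ(G)`: `X` nonempty, `G[X]` connected and `c(G-X) = c(G)`. -/
def InLambda {V E : Type*} [Fintype V] (head tail : E → V) (X : Finset V) : Prop :=
  X.Nonempty ∧ (∀ u ∈ X, ∀ v ∈ X, ReachIn head tail (↑X) u v) ∧
    ncompOn head tail ((↑X : Set V)ᶜ) = ncomp head tail (fun _ => True)

section AuxLemmas

variable {V E : Type*} (head tail : E → V)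

theorem reach_symm {ok : E → Prop} {x y : V} (h : Reach head tail ok x y) :
    Reach head tail ok y x := Relation.EqvGen.symm _ _ h

theorem reach_mono {ok ok' : E → Prop} (h : ∀ e, ok e → ok' e) {x y : V}
    (hr : Reach head tail ok x y) : Reach head tail ok' x y :=
  Relation.EqvGen.mono (fun _ _ ⟨e, he, hor⟩ => ⟨e, h e he, hor⟩) _ _ hr

theorem reach_le_of_gen {ok ok' : E → Prop}
    (h : ∀ x y, edgeRel head tail ok x y → Reach head tail ok' x y) {x y : V}
    (hr : Reach head tail ok x y) : Reach head tail ok' x y :=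
  ((Relation.EqvGen.is_equivalence (edgeRel head tail ok')).eqvGen_iff).mp
    (Relation.EqvGen.mono h _ _ hr)

theorem ncomp_congr {ok ok' : E → Prop}
    (h : ∀ x y, Reach head tail ok x y ↔ Reach head tail ok' x y) :
    ncomp head tail ok = ncomp head tail ok' := by
  have hs : Relation.EqvGen.setoid (edgeRel head tail ok)
      = Relation.EqvGen.setoid (edgeRel head tail ok') := Setoid.ext h
  unfold ncomp
  rw [hs]

theorem ncomp_of_not [Fintype V] (ok : E → Prop) (h : ∀ e, ¬ ok e) :
    ncomp head tail ok = Fintype.card V := by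
  have key : ∀ x y : V, Reach head tail ok x y → x = y := by
    intro x y hr
    induction hr with
    | rel a b hab => exact absurd hab.choose_spec.1 (h _)
    | refl => rfl
    | symm _ _ _ ih => exact ih.symm
    | trans _ _ _ _ _ ih1 ih2 => exact ih1.trans ih2
  rw [← Nat.card_eq_fintype_card]
  symm
  apply Nat.card_eq_of_bijective
    (fun v : V => Quotient.mk (Relation.EqvGen.setoid (edgeRel head tail ok)) v)
  constructor
  · intro a b hab
    exact key a b (Quotient.exact hab)
  · intro q
    obtain ⟨v, rfl⟩ := Quotient.exists_rep q
    exact ⟨v, rfl⟩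

theorem ncomp_merge [Fintype V] {ok : E → Prop} (e : E)
    (h : ¬ Reach head tail ok (head e) (tail e)) :
    ncomp head tail (fun f => ok f ∨ f = e) + 1 ≤ ncomp head tail ok := by
  set s1 := Relation.EqvGen.setoid (edgeRel head tail ok) with hs1
  set s2 := Relation.EqvGen.setoid (edgeRel head tail (fun f => ok f ∨ f = e)) with hs2
  letI : Fintype (Quotient s1) := Fintype.ofFinite _
  letI : Fintype (Quotient s2) := Fintype.ofFinite _
  have hmap : ∀ a b : V, s1.r a b → s2.r a b := fun a b hab =>
    Relation.EqvGen.mono (fun _ _ ⟨f, hf, ho⟩ => ⟨f, Or.inl hf, ho⟩) _ _ hab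
  let f : Quotient s1 → Quotient s2 := Quotient.map id (fun a b hab => hmap a b hab)
  have hmk : ∀ v : V, f (Quotient.mk s1 v) = Quotient.mk s2 v := fun v => rfl
  have hsurj : Function.Surjective f := by
    intro q
    obtain ⟨v, rfl⟩ := Quotient.exists_rep q
    exact ⟨Quotient.mk s1 v, hmk v⟩
  have hninj : ¬ Function.Injective f := by
    intro hinj
    have h1 : f (Quotient.mk s1 (head e)) = f (Quotient.mk s1 (tail e)) := by
      rw [hmk, hmk]
      exact Quotient.sound (Relation.EqvGen.rel _ _ ⟨e, Or.inr rfl, Or.inl ⟨rfl, rfl⟩⟩)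
    exact h (Quotient.exact (hinj h1))
  have hlt := Fintype.card_lt_of_surjective_not_injective f hsurj hninj
  have e1 : ncomp head tail ok = Fintype.card (Quotient s1) := by
    unfold ncomp; rw [← hs1, Nat.card_eq_fintype_card]
  have e2 : ncomp head tail (fun f => ok f ∨ f = e) = Fintype.card (Quotient s2) := by
    unfold ncomp; rw [← hs2, Nat.card_eq_fintype_card]
  omega

end AuxLemmas

/-- positivity of the coefficients for bridgeless graphs. -/
theorem stmt16 {V E A : Type*} [Fintype V] [Fintype E] [AddCommGroup A]
    (head tail : E → V) (lo : LinearOrder E) (b : V → A)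
    (hbridgeless : ∀ F : Finset E, IsBond head tail F → F.card ≠ 1)
    (hb : Compatible head tail (fun _ => True) b) :
    ∀ i : ℕ, i ≤ cycRank head tail (∅ : Finset E) → 1 ≤ aCoeff head tail lo b i := by
  letI : LinearOrder E := lo
  intro i hi
  -- The "Kruskal" spanning forest predicate
  set Tpred : E → Prop := fun e => ¬ Reach head tail (fun f => f < e) (head e) (tail e)
    with hTpred
  have wf : WellFounded ((· < ·) : E → E → Prop) :=
    Finite.wellFounded_of_trans_of_irrefl _
  -- every edge's endpoints are connected inside the forest
  have span : ∀ e : E, Reach head tail Tpred (head e) (tail e) := fun e =>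
    WellFounded.induction (C := fun e => Reach head tail Tpred (head e) (tail e)) wf e (by
      intro e ih
      by_cases he : Tpred e
      · exact Relation.EqvGen.rel _ _ ⟨e, he, Or.inl ⟨rfl, rfl⟩⟩
      · have hr : Reach head tail (fun f => f < e) (head e) (tail e) := not_not.mp he
        refine reach_le_of_gen head tail ?_ hr
        rintro x y ⟨f, hf, hor⟩
        have hf' := ih f hf
        rcases hor with ⟨h1, h2⟩ | ⟨h1, h2⟩
        · rw [← h1, ← h2]; exact hf'
        · rw [← h1, ← h2]; exact reach_symm head tail hf')
  have spanAll : ∀ x y : V, Reach head tail (fun _ => True) x y ↔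
      Reach head tail Tpred x y := by
    intro x y
    constructor
    · intro h
      refine reach_le_of_gen head tail ?_ h
      rintro a c ⟨f, -, hor⟩
      rcases hor with ⟨h1, h2⟩ | ⟨h1, h2⟩
      · rw [← h1, ← h2]; exact span f
      · rw [← h1, ← h2]; exact reach_symm head tail (span f)
    · exact reach_mono head tail (fun e _ => trivial)
  set Tf : Finset E := Finset.univ.filter Tpred with hTf
  -- forest counting: few forest edges
  have forestcount : ∀ W : Finset E, (∀ e ∈ W, Tpred e) →
      ncomp head tail (fun f => f ∈ W) + W.card ≤ Fintype.card V := by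
    intro W
    induction W using Finset.strongInductionOn with
    | _ W ih =>
      intro hWT
      rcases W.eq_empty_or_nonempty with rfl | hne
      · rw [ncomp_of_not head tail _ (fun e he => Finset.notMem_empty e he)]
        simp
      · set e := W.max' hne with he
        have heW : e ∈ W := W.max'_mem hne
        have hstep : ¬ Reach head tail (fun f => f ∈ W.erase e) (head e) (tail e) := by
          intro hr
          refine hWT e heW ?_
          refine reach_mono head tail (fun f hf => ?_) hr
          exact lt_of_le_of_ne (W.le_max' f (Finset.mem_of_mem_erase hf))
            (Finset.ne_of_mem_erase hf)
        have hmerge := ncomp_merge head tail e hstep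
        have hcong : ncomp head tail (fun f => f ∈ W)
            = ncomp head tail (fun f => f ∈ W.erase e ∨ f = e) := by
          apply ncomp_congr
          intro x y
          constructor
          · refine reach_mono head tail (fun f hf => ?_)
            rcases eq_or_ne f e with rfl | hfe
            · exact Or.inr rfl
            · exact Or.inl (Finset.mem_erase.mpr ⟨hfe, hf⟩)
          · refine reach_mono head tail (fun f hf => ?_)
            rcases hf with hf | rfl
            · exact Finset.mem_of_mem_erase hf
            · exact heW
        have ihW := ih (W.erase e) (Finset.erase_ssubset heW)
          (fun f hf => hWT f (Finset.mem_of_mem_erase hf))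
        have hcard : (W.erase e).card + 1 = W.card := Finset.card_erase_add_one heW
        omega
  have hTspan : ncomp head tail (fun f => f ∈ Tf) = ncomp head tail (fun _ => True) := by
    apply ncomp_congr
    intro x y
    constructor
    · exact reach_mono head tail (fun e _ => trivial)
    · intro h
      exact reach_mono head tail
        (fun e he => Finset.mem_filter.mpr ⟨Finset.mem_univ e, he⟩) ((spanAll x y).mp h)
  have hTcount : Tf.card + ncomp head tail (fun _ => True) ≤ Fintype.card V := by
    have h1 := forestcount Tf (fun e he => (Finset.mem_filter.mp he).2)
    omega
  -- choose S of size i inside the complement of the forest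
  have hc0 : ncomp head tail (fun e => e ∉ (∅ : Finset E)) = ncomp head tail (fun _ => True) :=
    ncomp_congr head tail (fun x y =>
      ⟨reach_mono head tail (fun e _ => trivial),
       reach_mono head tail (fun e _ => Finset.notMem_empty e)⟩)
  have hibound : i ≤ (Finset.univ \ Tf).card := by
    rw [Finset.card_sdiff_of_subset (Finset.subset_univ _), Finset.card_univ]
    have hTE : Tf.card ≤ Fintype.card E := by
      rw [← Finset.card_univ]; exact Finset.card_le_card (Finset.subset_univ _)
    unfold cycRank at hi
    rw [Finset.card_empty, hc0] at hi
    omega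
  obtain ⟨S, hSsub, hScard⟩ := Finset.exists_subset_card_eq hibound
  have hSnotT : ∀ e ∈ S, ¬ Tpred e := by
    intro e heS hT
    exact (Finset.mem_sdiff.mp (hSsub heS)).2 (Finset.mem_filter.mpr ⟨Finset.mem_univ e, hT⟩)
  -- G - S has the same components as G
  have hreachS : ∀ x y : V, Reach head tail (fun e => e ∉ S) x y ↔
      Reach head tail (fun _ => True) x y := by
    intro x y
    constructor
    · exact reach_mono head tail (fun e _ => trivial)
    · intro h
      refine reach_mono head tail (fun e he heS => ?_) ((spanAll x y).mp h)
      exact (Finset.mem_sdiff.mp (hSsub heS)).2 (Finset.mem_filter.mpr ⟨Finset.mem_univ e, he⟩)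
  have hcompat : Compatible head tail (fun e => e ∉ S) b := by
    intro v
    rw [show (∑ u : V, if Reach head tail (fun e => e ∉ S) u v then b u else 0)
        = (∑ u : V, if Reach head tail (fun _ => True) u v then b u else 0) from
      Finset.sum_congr rfl (fun u _ => if_congr (hreachS u v) rfl rfl)]
    exact hb v
  -- S contains no compatible broken bond
  have hnb : ∀ B : Finset E, IsCBrokenBond head tail lo b B → ¬ B ⊆ S := by
    rintro B ⟨F, ⟨⟨hFne, hFnc, hFmin⟩, -⟩, hne, rfl⟩ hBS
    have hcardne : F.card ≠ 1 := hbridgeless F ⟨hFne, hFnc, hFmin⟩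
    have hcardpos : 0 < F.card := Finset.card_pos.mpr hFne
    have hcard2 : 1 < F.card := by omega
    have hlt : F.min' hne < F.max' hne := Finset.min'_lt_max'_of_card F hcard2
    set g := F.min' hne with hg
    have hgS : g ∈ S := hBS (Finset.mem_erase.mpr ⟨ne_of_lt hlt, F.min'_mem hne⟩)
    have hgr : Reach head tail (fun f => f < g) (head g) (tail g) :=
      not_not.mp (hSnotT g hgS)
    have hgr2 : Reach head tail (fun e => e ∉ F) (head g) (tail g) :=
      reach_mono head tail
        (fun f hf hfF => absurd (F.min'_le f hfF) (not_le.mpr hf)) hgr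
    have key : ∀ x y : V, Reach head tail (fun e => e ∉ F.erase g) x y ↔
        Reach head tail (fun e => e ∉ F) x y := by
      intro x y
      constructor
      · intro h
        refine reach_le_of_gen head tail ?_ h
        rintro a c ⟨f, hf, hor⟩
        by_cases hfF : f ∈ F
        · have hfg : f = g := by
            by_contra hne'
            exact hf (Finset.mem_erase.mpr ⟨hne', hfF⟩)
          subst hfg
          rcases hor with ⟨h1, h2⟩ | ⟨h1, h2⟩
          · rw [← h1, ← h2]; exact hgr2
          · rw [← h1, ← h2]; exact reach_symm head tail hgr2
        · exact Relation.EqvGen.rel _ _ ⟨f, hfF, hor⟩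
      · exact reach_mono head tail (fun e he hmem => he (Finset.mem_of_mem_erase hmem))
    have heq := ncomp_congr head tail key
    have hmin := hFmin (F.erase g) (Finset.erase_ssubset (F.min'_mem hne))
    exact hFnc (heq.symm.trans hmin)
  -- conclude
  unfold aCoeff
  haveI : Nonempty {S : Finset E // S.card = i ∧ Compatible head tail (fun e => e ∉ S) b ∧
      ∀ B : Finset E, IsCBrokenBond head tail lo b B → ¬ B ⊆ S} :=
    ⟨⟨S, hScard, hcompat, hnb⟩⟩
  exact Nat.card_pos
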